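/- arXiv:1909.06898 — 2 statements merged into one kernel-verified Lean document; each statement's English description precedes it below -/
import Mathlib

section
/- Let M = Σ_{i=m}^{n} a_i S_{λ,μ}^i ∈ A_{λ,μ} with m ≤ n integers and a_i ∈ K(x,y). Then the left scalar remainder of M by S_y − 1 is given by LSR(M, S_y − 1) = Σ_{r=0}^{μ−1} ( Σ_{i_r} σ_y^{−q_{i_r}}(a_{i_r}) ) S_{λ,μ}^r, where for each r the inner sum runs over all integers i_r with m ≤ i_r ≤ n such that i_r = μ q_{i_r} + r for some integer q_{i_r}. -/
open Polynomial BigOperators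

noncomputable section

/-- The shift automorphism `X ↦ X + 1` of a polynomial ring. -/
def shiftPoly (A : Type*) [CommRing A] : Polynomial A ≃ₐ[A] Polynomial A :=
  AlgEquiv.ofAlgHom (aeval (X + 1)) (aeval (X - 1))
    (by apply algHom_ext; simp) (by apply algHom_ext; simp)

variable (K : Type*) [Field K] [CharZero K]

/-- `K[x,y]` modelled as `K[x][y]`: the inner variable is `x`, the outer one is `y`. -/
abbrev Rxy := Polynomial (Polynomial K)

/-- The rational function field `K(x,y)`, as the fraction field of `K[x][y]`. -/
abbrev Fxy := FractionRing (Rxy K)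

/-- The shift `x ↦ x + 1` on `K[x]`. -/
def σxK : RingAut (Polynomial K) := (shiftPoly K).toRingEquiv

/-- The shift `x ↦ x + 1` on `K[x,y]`. -/
def σxR : RingAut (Rxy K) := mapEquiv (shiftPoly K).toRingEquiv

/-- The shift `y ↦ y + 1` on `K[x,y]`. -/
def σyR : RingAut (Rxy K) := (shiftPoly (Polynomial K)).toRingEquiv

/-- The shift `σ_x` on `K(x,y)`. -/
def σxF : RingAut (Fxy K) := IsFractionRing.ringEquivOfRingEquiv (σxR K)

/-- The shift `σ_y` on `K(x,y)`. -/
def σyF : RingAut (Fxy K) := IsFractionRing.ringEquivOfRingEquiv (σyR K)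

/-- The canonical map `K[x,y] → K(x,y)`. -/
def ι₀ : Rxy K →+* Fxy K := algebraMap (Rxy K) (Fxy K)

/-- The canonical map `K[x] → K(x,y)`. -/
def ιx₀ : Polynomial K →+* Fxy K := (ι₀ K).comp (Polynomial.C : Polynomial K →+* Rxy K)

/-- The canonical map `K → K(x,y)`. -/
def ιK : K →+* Fxy K := (ιx₀ K).comp (Polynomial.C : K →+* Polynomial K)

/-- The element `x` of `K(x,y)`. -/
def xF : Fxy K := ιx₀ K X

/-- The element `y` of `K(x,y)`. -/
def yF : Fxy K := ι₀ K X

/-- A rational function `f ∈ K(x,y)` is `σ_y`-summable if `f = σ_y(g) - g`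
for some `g ∈ K(x,y)`. -/
def IsSummableY (f : Fxy K) : Prop := ∃ g : Fxy K, f = σyF K g - g

/-- The Laurent operator ring `A = K(x,y)[S_x,S_y,S_x⁻¹,S_y⁻¹]`, an operator being
recorded by its (finitely supported) family of coefficients `a_{ij}` in
`L = Σ a_{ij} S_x^i S_y^j`. -/
abbrev OpA := (ℤ × ℤ) →₀ Fxy K

/-- The subring `A_{λ,μ} = K(x,y)[S_{λ,μ}, S_{λ,μ}⁻¹]`, an operator being recorded by its
(finitely supported) family of coefficients `a_i` in `M = Σ a_i S_{λ,μ}^i`. -/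
abbrev OpB := ℤ →₀ Fxy K

/-- The automorphism `σ_x^i σ_y^j` of `K(x,y)` attached to the monomial `S_x^i S_y^j`. -/
def σv (v : ℤ × ℤ) : RingAut (Fxy K) := σxF K ^ v.1 * σyF K ^ v.2

/-- Multiplication in `A`, determined by the commutation rule `S_x^i S_y^j f
= σ_x^i σ_y^j (f) S_x^i S_y^j`. -/
def mulA (L M : OpA K) : OpA K :=
  L.sum fun p a => M.sum fun q b => Finsupp.single (p + q) (a * σv K p b)

/-- The application of an operator `L = Σ a_{ij} S_x^i S_y^j ∈ A` to a rational function. -/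
def applyA (L : OpA K) (f : Fxy K) : Fxy K := L.sum fun p a => a * σv K p f

/-- The operator `S_y - 1 ∈ A`. -/
def SyOne : OpA K :=
  Finsupp.single ((0 : ℤ), (1 : ℤ)) (1 : Fxy K) - Finsupp.single ((0 : ℤ), (0 : ℤ)) (1 : Fxy K)

section TypeLamMu

/- `α`, `β` are the Bézout cofactors for the integer-linear type `(λ, μ)`,
so that `S_{λ,μ} = S_x^α S_y^β`. -/
variable (α β : ℤ)

/-- The automorphism `σ_{λ,μ} = σ_x^α σ_y^β` of `K(x,y)` attached to `S_{λ,μ} = S_x^α S_y^β`. -/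
def τF : RingAut (Fxy K) := σxF K ^ α * σyF K ^ β

/-- Multiplication in `A_{λ,μ}`. -/
def mulB (L M : OpB K) : OpB K :=
  L.sum fun i a => M.sum fun j b => Finsupp.single (i + j) (a * (τF K α β ^ i) b)

/-- The application of an operator `M = Σ a_i S_{λ,μ}^i ∈ A_{λ,μ}` to a rational function. -/
def applyB (M : OpB K) (f : Fxy K) : Fxy K := M.sum fun i a => a * (τF K α β ^ i) f

/-- The inclusion `A_{λ,μ} ⊆ A`, sending `S_{λ,μ}^k` to `S_x^{kα} S_y^{kβ}`. -/
def ιB (M : OpB K) : OpA K := Finsupp.mapDomain (fun k : ℤ => (k * α, k * β)) M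

/-- The left `K(x,y)`-linear map `φ_{λ,μ} : A → A_{λ,μ}`,
sending `Σ a_{ij} S_x^i S_y^j` to `Σ a_{ij} S_{λ,μ}^{iλ+jμ}`. -/
def φB (lam μ : ℤ) (L : OpA K) : OpB K :=
  Finsupp.mapDomain (fun p : ℤ × ℤ => p.1 * lam + p.2 * μ) L

/-- The left scalar multiplication `L ⊙ M = φ_{λ,μ}(L M)` of `L ∈ A` on `M ∈ A_{λ,μ}`. -/
def odot (lam μ : ℤ) (L : OpA K) (M : OpB K) : OpB K :=
  φB K lam μ (mulA K L (ιB K α β M))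

end TypeLamMu

/-- The lowest order `lord(M)` of a (nonzero) operator `M ∈ A_{λ,μ}`. -/
def lord (M : OpB K) : ℤ := (M.support.min).untopD 0

/-- The highest order `hord(M)` of a (nonzero) operator `M ∈ A_{λ,μ}`. -/
def hord (M : OpB K) : ℤ := (M.support.max).unbotD 0

/-- The inclusion `K(x,y)[S_y, S_y⁻¹] ⊆ A`. -/
def ιy (L : ℤ →₀ Fxy K) : OpA K := Finsupp.mapDomain (fun j : ℤ => ((0 : ℤ), j)) L

/-- The inclusion `K[x][S_x] ⊆ A`, for operators with polynomial coefficients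
supported on nonnegative powers of `S_x`. -/
def ιxOp (L : ℕ →₀ Polynomial K) : OpA K :=
  L.sum fun ℓ c => Finsupp.single ((ℓ : ℤ), (0 : ℤ)) (ιx₀ K c)

/-- A nonzero operator `L = Σ c_ℓ S_x^ℓ ∈ K[x][S_x]` is a telescoper for `f ∈ K(x,y)`
if `L(f)` is `σ_y`-summable. -/
def IsTelescoper (L : ℕ →₀ Polynomial K) (f : Fxy K) : Prop :=
  L ≠ 0 ∧ IsSummableY K (applyA K (ιxOp K L) f)

/-- The degree in `x` of a polynomial in `K[x,y] = K[x][y]`. -/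
def degX (r : Rxy K) : ℕ := r.support.sup fun n => (r.coeff n).natDegree

/-- The total degree in `x, y` of a polynomial in `K[x,y] = K[x][y]`. -/
def degXY (r : Rxy K) : ℕ := r.support.sup fun n => n + (r.coeff n).natDegree

end

section AuxStatement6

variable {K : Type*} [Field K] [CharZero K] {lam μ α β : ℤ}

private lemma zpow_apply_apply (σ : RingAut (Fxy K)) (s t : ℤ) (c : Fxy K) :
    (σ ^ s) ((σ ^ t) c) = (σ ^ (s + t)) c := by
  rw [zpow_add]; rfl

private lemma odot_zero : odot K α β lam μ (SyOne K) 0 = 0 := by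
  unfold odot ιB mulA φB
  rw [Finsupp.mapDomain_zero]
  simp [Finsupp.sum_zero_index, Finset.sum_const_zero]

private lemma odot_add (Q₁ Q₂ : OpB K) :
    odot K α β lam μ (SyOne K) (Q₁ + Q₂) =
      odot K α β lam μ (SyOne K) Q₁ + odot K α β lam μ (SyOne K) Q₂ := by
  unfold odot ιB mulA φB
  rw [Finsupp.mapDomain_add]
  have h : ∀ (p : ℤ × ℤ) (a : Fxy K),
      ((Finsupp.mapDomain (fun k : ℤ => (k * α, k * β)) Q₁ +
        Finsupp.mapDomain (fun k : ℤ => (k * α, k * β)) Q₂).sum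
          fun q b => Finsupp.single (p + q) (a * σv K p b)) =
      (Finsupp.mapDomain (fun k : ℤ => (k * α, k * β)) Q₁).sum
          (fun q b => Finsupp.single (p + q) (a * σv K p b)) +
      (Finsupp.mapDomain (fun k : ℤ => (k * α, k * β)) Q₂).sum
          (fun q b => Finsupp.single (p + q) (a * σv K p b)) := by
    intro p a
    exact Finsupp.sum_add_index' (by simp) (by intros; simp [mul_add, Finsupp.single_add])
  simp only [h]
  rw [Finsupp.sum_add, Finsupp.mapDomain_add]

private lemma odot_single (hbez : α * lam + β * μ = 1) (k : ℤ) (b : Fxy K) :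
    odot K α β lam μ (SyOne K) (Finsupp.single k b) =
      Finsupp.single (k + μ) (σyF K b) - Finsupp.single k b := by
  have hS : SyOne K = Finsupp.single ((0 : ℤ), (1 : ℤ)) (1 : Fxy K) +
      Finsupp.single ((0 : ℤ), (0 : ℤ)) (-1 : Fxy K) := by
    rw [SyOne, sub_eq_add_neg, Finsupp.single_neg]
  unfold odot ιB mulA φB
  rw [hS, Finsupp.mapDomain_single]
  rw [Finsupp.sum_add_index' (by simp [Finsupp.sum_single_index])
    (by intros; simp [Finsupp.sum_single_index, add_mul, Finsupp.single_add])]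
  rw [Finsupp.sum_single_index (by simp [Finsupp.sum_single_index]),
    Finsupp.sum_single_index (by simp [Finsupp.sum_single_index]),
    Finsupp.sum_single_index (by simp), Finsupp.sum_single_index (by simp)]
  rw [Finsupp.mapDomain_add, Finsupp.mapDomain_single, Finsupp.mapDomain_single]
  have h1 : ((0 : ℤ), (1 : ℤ)) + (k * α, k * β) = (k * α, 1 + k * β) := by
    simp [Prod.ext_iff]
  have h2 : ((0 : ℤ), (0 : ℤ)) + (k * α, k * β) = (k * α, k * β) := by
    simp [Prod.ext_iff]
  rw [h1, h2]
  have h3 : k * α * lam + (1 + k * β) * μ = k + μ := by linear_combination k * hbez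
  have h4 : k * α * lam + k * β * μ = k := by linear_combination k * hbez
  simp only [h3, h4]
  have h5 : σv K ((0 : ℤ), (1 : ℤ)) b = σyF K b := by
    simp [σv]
  have h6 : σv K ((0 : ℤ), (0 : ℤ)) b = b := by
    simp only [σv, zpow_zero, one_mul, mul_one]
    rfl
  rw [h5, h6, one_mul, neg_one_mul, Finsupp.single_neg, sub_eq_add_neg]

private lemma key_single (hμ : 0 < μ) (hbez : α * lam + β * μ = 1) (q : ℤ) :
    ∀ i : ℤ, i / μ = q → ∀ a : Fxy K, ∃ Q : OpB K,
      Finsupp.single i a = odot K α β lam μ (SyOne K) Q +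
        Finsupp.single (i % μ) ((σyF K ^ (-q)) a) := by
  induction q using Int.induction_on with
  | zero =>
      intro i hi a
      refine ⟨0, ?_⟩
      have hmod : i % μ = i := by
        rw [Int.emod_def, hi, mul_zero, sub_zero]
      rw [hmod, odot_zero, neg_zero, zpow_zero, zero_add]
      rfl
  | succ n ih =>
      intro i hi a
      have hμ0 : μ ≠ 0 := ne_of_gt hμ
      have hi' : (i - μ) / μ = (n : ℤ) := by
        have h := Int.add_mul_ediv_right i (-1) hμ0
        rw [hi] at h
        have : i - μ = i + -1 * μ := by ring
        rw [this, h]; ring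
      have hmod : (i - μ) % μ = i % μ := by
        rw [Int.emod_def, Int.emod_def, hi, hi']
        ring
      obtain ⟨Q', hQ'⟩ := ih (i - μ) hi' ((σyF K ^ (-1 : ℤ)) a)
      rw [hmod, zpow_apply_apply] at hQ'
      have he : (-(n : ℤ) + -1) = -((n : ℤ) + 1) := by ring
      rw [he] at hQ'
      refine ⟨Q' + Finsupp.single (i - μ) ((σyF K ^ (-1 : ℤ)) a), ?_⟩
      rw [odot_add, odot_single hbez]
      have hsa : σyF K ((σyF K ^ (-1 : ℤ)) a) = a := by
        have : σyF K ((σyF K ^ (-1 : ℤ)) a) = (σyF K ^ (1 : ℤ)) ((σyF K ^ (-1 : ℤ)) a) := by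
          rw [zpow_one]
        rw [this, zpow_apply_apply, show (1 : ℤ) + -1 = 0 by ring, zpow_zero]
        rfl
      rw [hsa, sub_add_cancel]
      rw [hQ']
      abel
  | pred n ih =>
      intro i hi a
      have hμ0 : μ ≠ 0 := ne_of_gt hμ
      have hi' : (i + μ) / μ = -(n : ℤ) := by
        have h := Int.add_mul_ediv_right i 1 hμ0
        rw [hi] at h
        rw [show i + μ = i + 1 * μ by ring, h]; ring
      have hmod : (i + μ) % μ = i % μ := by
        rw [Int.emod_def, Int.emod_def, hi, hi']
        ring
      obtain ⟨Q', hQ'⟩ := ih (i + μ) hi' (σyF K a)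
      have hσ : σyF K a = (σyF K ^ (1 : ℤ)) a := by rw [zpow_one]
      rw [hmod, hσ, zpow_apply_apply] at hQ'
      have he : (-(-(n : ℤ)) + 1) = -(-(n : ℤ) - 1) := by ring
      rw [he] at hQ'
      refine ⟨Q' + Finsupp.single i (-a), ?_⟩
      rw [odot_add, odot_single hbez, map_neg, Finsupp.single_neg, Finsupp.single_neg,
        sub_neg_eq_add]
      rw [← hσ] at hQ'
      rw [hQ']
      abel

private lemma key_general (hμ : 0 < μ) (hbez : α * lam + β * μ = 1) (M : OpB K) :
    ∃ Q : OpB K, M = odot K α β lam μ (SyOne K) Q +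
      M.sum (fun i a => Finsupp.single (i % μ) ((σyF K ^ (-(i / μ))) a)) := by
  induction M using Finsupp.induction with
  | zero => exact ⟨0, by rw [odot_zero, Finsupp.sum_zero_index, add_zero]⟩
  | single_add i a f hif ha ih =>
      obtain ⟨Q₁, hQ₁⟩ := key_single hμ hbez (i / μ) i rfl a
      obtain ⟨Q₂, hQ₂⟩ := ih
      refine ⟨Q₁ + Q₂, ?_⟩
      rw [Finsupp.sum_add_index' (by intro j; simp) (by intro j b₁ b₂; simp [Finsupp.single_add]),
        Finsupp.sum_single_index (by simp), odot_add]
      conv_lhs => rw [hQ₁, hQ₂]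
      abel

private lemma phiSy (hμ : 0 < μ) :
    φB K lam μ (SyOne K) = Finsupp.single μ (1 : Fxy K) + Finsupp.single 0 (-1 : Fxy K) := by
  unfold φB SyOne
  rw [sub_eq_add_neg, ← Finsupp.single_neg, Finsupp.mapDomain_add, Finsupp.mapDomain_single,
    Finsupp.mapDomain_single]
  norm_num [Finsupp.single_neg]

private lemma phiSy_support (hμ : 0 < μ) :
    (φB K lam μ (SyOne K)).support = {μ, 0} := by
  rw [phiSy hμ, Finsupp.support_add_eq, Finsupp.support_single_ne_zero _ one_ne_zero,
    Finsupp.support_single_ne_zero _ (neg_ne_zero.mpr one_ne_zero)]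
  · rw [← Finset.insert_eq]
  · rw [Finsupp.support_single_ne_zero _ one_ne_zero,
      Finsupp.support_single_ne_zero _ (neg_ne_zero.mpr one_ne_zero)]
    simp only [Finset.disjoint_singleton]
    omega

private lemma lord_phiSy (hμ : 0 < μ) : lord K (φB K lam μ (SyOne K)) = 0 := by
  unfold lord
  rw [phiSy_support hμ]
  have : ({μ, 0} : Finset ℤ).min = ((0 : ℤ) : WithTop ℤ) := by
    rw [show ({μ, 0} : Finset ℤ) = insert μ {0} from rfl, Finset.min_insert,
      Finset.min_singleton]
    rw [show ((μ : WithTop ℤ)) ⊓ ((0 : ℤ) : WithTop ℤ) = ((min μ 0 : ℤ) : WithTop ℤ) from rfl]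
    congr 1
    omega
  rw [this, WithTop.untopD_coe]

private lemma hord_phiSy (hμ : 0 < μ) : hord K (φB K lam μ (SyOne K)) = μ := by
  unfold hord
  rw [phiSy_support hμ]
  have : ({μ, 0} : Finset ℤ).max = ((μ : ℤ) : WithBot ℤ) := by
    rw [show ({μ, 0} : Finset ℤ) = insert μ {0} from rfl, Finset.max_insert,
      Finset.max_singleton]
    rw [show ((μ : WithBot ℤ)) ⊔ ((0 : ℤ) : WithBot ℤ) = ((max μ 0 : ℤ) : WithBot ℤ) from rfl]
    congr 1
    omega
  rw [this, WithBot.unbotD_coe]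

end AuxStatement6

/-- Remark `REM:formulas`, remainder formula.
Let `M = Σ_{i=m}^{n} a_i S_{λ,μ}^i ∈ A_{λ,μ}`.  Then the left scalar remainder of `M` by
`S_y − 1` is `Σ_{r=0}^{μ−1} (Σ_{i_r} σ_y^{−q_{i_r}}(a_{i_r})) S_{λ,μ}^r`, where for each
`r` the inner sum runs over all `i_r` with `i_r = μ q_{i_r} + r`; i.e. this operator `R`
satisfies the defining property of the left scalar remainder:
`M = (S_y − 1) ⊙ Q + R` for some `Q`, with `R = 0` or
`lord(φ(S_y − 1)) ≤ lord(R) ≤ hord(R) < hord(φ(S_y − 1))`. -/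
theorem statement6 (K : Type*) [Field K] [CharZero K]
    (lam μ α β : ℤ) (hμ : 0 < μ) (hcop : IsCoprime lam μ)
    (hbez : α * lam + β * μ = 1) (hα : 0 ≤ α ∧ α < μ)
    (hβ : lam ≠ 0 → |β| ≤ |lam|) (hβ0 : lam = 0 → α = 0 ∧ β = 1)
    (M : OpB K) :
    ∃ Q : OpB K,
      M = odot K α β lam μ (SyOne K) Q +
          M.sum (fun i a => Finsupp.single (i % μ) ((σyF K ^ (-(i / μ))) a)) ∧
        (M.sum (fun i a => Finsupp.single (i % μ) ((σyF K ^ (-(i / μ))) a)) = 0 ∨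
          (lord K (φB K lam μ (SyOne K)) ≤
              lord K (M.sum fun i a => Finsupp.single (i % μ) ((σyF K ^ (-(i / μ))) a)) ∧
            lord K (M.sum fun i a => Finsupp.single (i % μ) ((σyF K ^ (-(i / μ))) a)) ≤
              hord K (M.sum fun i a => Finsupp.single (i % μ) ((σyF K ^ (-(i / μ))) a)) ∧
            hord K (M.sum fun i a => Finsupp.single (i % μ) ((σyF K ^ (-(i / μ))) a)) <
              hord K (φB K lam μ (SyOne K)))) := by
  obtain ⟨Q, hQ⟩ := key_general hμ hbez M
  refine ⟨Q, hQ, ?_⟩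
  set R := M.sum (fun i a => Finsupp.single (i % μ) ((σyF K ^ (-(i / μ))) a)) with hR
  by_cases h0 : R = 0
  · exact Or.inl h0
  · right
    have hne : R.support.Nonempty := Finsupp.support_nonempty_iff.mpr h0
    have hbound : ∀ j ∈ R.support, 0 ≤ j ∧ j < μ := by
      intro j hj
      rw [hR] at hj
      have h1 := Finsupp.support_sum hj
      rw [Finset.mem_biUnion] at h1
      obtain ⟨i, _, hji⟩ := h1
      have h2 := Finsupp.support_single_subset hji
      rw [Finset.mem_singleton] at h2
      subst h2
      exact ⟨Int.emod_nonneg i (ne_of_gt hμ), Int.emod_lt_of_pos i hμ⟩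
    have hlord : lord K R = R.support.min' hne := by
      unfold lord; rw [← Finset.coe_min' hne, WithTop.untopD_coe]
    have hhord : hord K R = R.support.max' hne := by
      unfold hord; rw [← Finset.coe_max' hne, WithBot.unbotD_coe]
    refine ⟨?_, ?_, ?_⟩
    · rw [lord_phiSy hμ, hlord]
      exact (hbound _ (Finset.min'_mem _ hne)).1
    · rw [hlord, hhord]
      exact Finset.min'_le _ _ (Finset.max'_mem _ hne)
    · rw [hord_phiSy hμ, hhord]
      exact (hbound _ (Finset.max'_mem _ hne)).2
end

section
/- Let r, r_0 ∈ K(x,y) be two nonzero σ_y-remainders, and let r = f_0/p_0 + Σ_{i=1}^{m} f_i/σ_y^{ℓ_i}(p_i) be the SCD-based partial fraction decomposition of r with respect to r_0. Define r̃ = f_0/p_0 + Σ_{i=1}^{m} σ_y^{−ℓ_i}(f_i)/p_i. Then r̃ is a σ_y-remainder of r (i.e., r − r̃ is σ_y-summable, r̃ is proper with respect to y, and its denominator is σ_y-free), and for any c_0, c_1 ∈ K[x], the rational function c_0 r_0 + c_1 r̃ is proper with respect to y with σ_y-free denominator (hence is a σ_y-remainder). -/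
open Polynomial BigOperators

noncomputable section

variable (K : Type*) [Field K] [CharZero K]

/-- The element `λx + μy` of `K(x,y)`. -/
def wF (lam μ : ℤ) : Fxy K := (lam : Fxy K) * xF K + (μ : Fxy K) * yF K

/-- The rational function `p(λx + μy) ∈ K(x,y)`, for a univariate polynomial `p ∈ K[z]`. -/
def peF (lam μ : ℤ) (p : Polynomial K) : Fxy K := Polynomial.eval₂ (ιK K) (wF K lam μ) p

/-- The element `λx + μy` of `K[x,y]`. -/
def wR (lam μ : ℤ) : Rxy K :=
  (lam : Rxy K) * Polynomial.C Polynomial.X + (μ : Rxy K) * Polynomial.X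

/-- The polynomial `p(λx + μy) ∈ K[x,y]`, for a univariate polynomial `p ∈ K[z]`. -/
def peR (lam μ : ℤ) (p : Polynomial K) : Rxy K :=
  Polynomial.eval₂ (algebraMap K (Rxy K)) (wR K lam μ) p

end

noncomputable section

variable (K : Type*) [Field K] [CharZero K]

/-- A nonzero polynomial `b ∈ K[x,y]` is `σ_y`-free if `gcd(b, σ_y^ℓ(b)) ∈ K[x]` for all
nonzero integers `ℓ`, i.e. every common divisor of `b` and `σ_y^ℓ(b)` has `y`-degree `0`. -/
def SigmaYFree (b : Rxy K) : Prop :=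
  ∀ ℓ : ℤ, ℓ ≠ 0 → ∀ d : Rxy K, d ∣ b → d ∣ (σyR K ^ ℓ) b → d.natDegree = 0

/-- A polynomial in `K[x,y] = K[x][y]` is `y`-primitive if the gcd over `K[x]` of its
coefficients with respect to `y` equals `1`. -/
def YPrimitive (b : Rxy K) : Prop :=
  ∀ d : Polynomial K, (∀ n : ℕ, d ∣ b.coeff n) → IsUnit d

/-- A rational function is proper with respect to `y`: the degree in `y` of its numerator
is less than that of its denominator. -/
def ProperY (f : Fxy K) : Prop :=
  ∃ a b : Rxy K, b ≠ 0 ∧ f = ι₀ K a / ι₀ K b ∧ a.degree < b.degree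

/-- A rational function has a `σ_y`-free denominator (in lowest terms). -/
def SigmaYFreeDenom (f : Fxy K) : Prop :=
  ∃ a b : Rxy K, b ≠ 0 ∧ IsRelPrime a b ∧ f = ι₀ K a / ι₀ K b ∧ SigmaYFree K b

/-- `r` is a `σ_y`-remainder (of itself): proper with respect to `y`, with `σ_y`-free
denominator. -/
def IsSigmaYRemainder (r : Fxy K) : Prop := ProperY K r ∧ SigmaYFreeDenom K r

/-- `r` is a `σ_y`-remainder of `f`: `f − r` is `σ_y`-summable, `r` is proper with
respect to `y`, and the denominator of `r` is `σ_y`-free. -/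
def IsSigmaYRemainderOf (r f : Fxy K) : Prop :=
  IsSummableY K (f - r) ∧ IsSigmaYRemainder K r

end

set_option linter.unusedSectionVars false
namespace St15
section Aux
variable (K : Type*) [Field K] [CharZero K]

lemma ι₀_injective : Function.Injective (ι₀ K) :=
  IsFractionRing.injective (Rxy K) (Fxy K)

lemma ι₀_ne_zero {b : Rxy K} (hb : b ≠ 0) : ι₀ K b ≠ 0 := fun h =>
  hb (ι₀_injective K (h.trans (map_zero (ι₀ K)).symm))

lemma ιx₀_eq (u : Polynomial K) : ιx₀ K u = ι₀ K (Polynomial.C u) := rfl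

lemma σyR_apply (p : Rxy K) : σyR K p = p.comp (X + 1) := rfl

lemma σyR_C (u : Polynomial K) : σyR K (Polynomial.C u) = Polynomial.C u := by
  rw [σyR_apply, C_comp]

lemma σyF_ι₀ (p : Rxy K) : σyF K (ι₀ K p) = ι₀ K (σyR K p) :=
  IsFractionRing.ringEquivOfRingEquiv_algebraMap (σyR K) p

lemma natDegree_σyR (p : Rxy K) : (σyR K p).natDegree = p.natDegree := by
  have h : σyR K p = Polynomial.taylor 1 p := by
    rw [σyR_apply, Polynomial.taylor_apply, Polynomial.C_1]
  rw [h, natDegree_taylor]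

-- generic zpow commuting lemma
lemma zpow_comm_hom {A B : Type*} [CommRing A] [CommRing B]
    (e : RingAut A) (e' : RingAut B) (j : A →+* B)
    (h : ∀ a, e' (j a) = j (e a)) (ℓ : ℤ) (a : A) :
    (e' ^ ℓ) (j a) = j ((e ^ ℓ) a) := by
  have hinv : ∀ a, e'⁻¹ (j a) = j (e⁻¹ a) := by
    intro a
    have := h (e⁻¹ a)
    rw [show e (e⁻¹ a) = a from e.apply_symm_apply a] at this
    rw [← this, show e'⁻¹ (e' (j (e⁻¹ a))) = j (e⁻¹ a) from e'.symm_apply_apply _]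
  have hpow : ∀ (n : ℕ) (a : A), (e' ^ n) (j a) = j ((e ^ n) a) := by
    intro n
    induction n with
    | zero => intro a; rfl
    | succ n ih =>
      intro a
      rw [pow_succ, pow_succ]
      show (e' ^ n) (e' (j a)) = j ((e ^ n) (e a))
      rw [h a, ih (e a)]
  have hpowinv : ∀ (n : ℕ) (a : A), (e'⁻¹ ^ n) (j a) = j ((e⁻¹ ^ n) a) := by
    intro n
    induction n with
    | zero => intro a; rfl
    | succ n ih =>
      intro a
      rw [pow_succ, pow_succ]
      show (e'⁻¹ ^ n) (e'⁻¹ (j a)) = j ((e⁻¹ ^ n) (e⁻¹ a))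
      rw [hinv a, ih (e⁻¹ a)]
  obtain ⟨n, rfl | rfl⟩ := ℓ.eq_nat_or_neg
  · rw [zpow_natCast, zpow_natCast, hpow]
  · rw [zpow_neg, zpow_natCast, zpow_neg, zpow_natCast, ← inv_pow, ← inv_pow, hpowinv]

lemma σyF_zpow_ι₀ (ℓ : ℤ) (p : Rxy K) :
    (σyF K ^ ℓ) (ι₀ K p) = ι₀ K ((σyR K ^ ℓ) p) :=
  zpow_comm_hom (σyR K) (σyF K) (ι₀ K) (σyF_ι₀ K) ℓ p

lemma σyR_zpow_C (ℓ : ℤ) (u : Polynomial K) :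
    (σyR K ^ ℓ) (Polynomial.C u) = Polynomial.C u := by
  have := zpow_comm_hom (1 : RingAut (Polynomial K)) (σyR K)
    (Polynomial.C : Polynomial K →+* Rxy K) (fun a => σyR_C K a) ℓ u
  simpa using this

lemma natDegree_σyR_zpow (ℓ : ℤ) (p : Rxy K) :
    ((σyR K ^ ℓ) p).natDegree = p.natDegree := by
  have hinv : ∀ q : Rxy K, ((σyR K)⁻¹ q).natDegree = q.natDegree := by
    intro q
    conv_rhs => rw [show q = σyR K ((σyR K)⁻¹ q) from ((σyR K).apply_symm_apply q).symm]
    rw [natDegree_σyR]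
  have hpow : ∀ (n : ℕ) (q : Rxy K), ((σyR K ^ n) q).natDegree = q.natDegree := by
    intro n
    induction n with
    | zero => intro q; rfl
    | succ n ih =>
      intro q
      rw [pow_succ]
      show ((σyR K ^ n) (σyR K q)).natDegree = _
      rw [ih, natDegree_σyR]
  have hpowinv : ∀ (n : ℕ) (q : Rxy K), (((σyR K)⁻¹ ^ n) q).natDegree = q.natDegree := by
    intro n
    induction n with
    | zero => intro q; rfl
    | succ n ih =>
      intro q
      rw [pow_succ]
      show (((σyR K)⁻¹ ^ n) ((σyR K)⁻¹ q)).natDegree = _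
      rw [ih, hinv]
  obtain ⟨n, rfl | rfl⟩ := ℓ.eq_nat_or_neg
  · rw [zpow_natCast, hpow]
  · rw [zpow_neg, zpow_natCast, ← inv_pow, hpowinv]

lemma σyR_zpow_ne_zero (ℓ : ℤ) {p : Rxy K} (hp : p ≠ 0) : (σyR K ^ ℓ) p ≠ 0 :=
  (map_ne_zero_iff _ (σyR K ^ ℓ).injective).mpr hp

lemma σyR_zpow_dvd (ℓ : ℤ) {d p : Rxy K} (h : d ∣ p) :
    (σyR K ^ ℓ) d ∣ (σyR K ^ ℓ) p := map_dvd (F := RingAut (Rxy K)) _ h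

lemma σyR_zpow_zpow (ℓ ℓ' : ℤ) (p : Rxy K) :
    (σyR K ^ ℓ) ((σyR K ^ ℓ') p) = (σyR K ^ (ℓ + ℓ')) p := by
  rw [zpow_add]; rfl

lemma degree_σyR_zpow (ℓ : ℤ) (p : Rxy K) : ((σyR K ^ ℓ) p).degree = p.degree := by
  by_cases hp : p = 0
  · simp [hp]
  · rw [degree_eq_natDegree hp, degree_eq_natDegree (σyR_zpow_ne_zero K ℓ hp),
      natDegree_σyR_zpow]

end Aux
end St15
namespace St15
section Aux2
variable (K : Type*) [Field K] [CharZero K]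

lemma summable_add {f g : Fxy K} (hf : IsSummableY K f) (hg : IsSummableY K g) :
    IsSummableY K (f + g) := by
  obtain ⟨a, ha⟩ := hf; obtain ⟨b, hb⟩ := hg
  exact ⟨a + b, by rw [ha, hb, map_add]; ring⟩

lemma summable_zero : IsSummableY K 0 := ⟨0, by simp⟩

lemma summable_finsum {m : ℕ} (F : Fin m → Fxy K) (h : ∀ i, IsSummableY K (F i)) :
    IsSummableY K (∑ i : Fin m, F i) := by
  classical
  induction m with
  | zero => simpa using summable_zero K
  | succ n ih =>
    rw [Fin.sum_univ_succ]
    exact summable_add K (h 0) (ih _ (fun i => h i.succ))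

lemma summable_shift_pow (n : ℕ) (h : Fxy K) : IsSummableY K ((σyF K ^ n) h - h) := by
  induction n with
  | zero =>
    have h0 : (σyF K ^ (0:ℕ)) h = h := by rw [pow_zero]; rfl
    rw [h0, sub_self]; exact summable_zero K
  | succ n ih =>
    have : (σyF K ^ (n + 1)) h - h
        = ((σyF K ^ (n+1)) h - (σyF K ^ n) h) + ((σyF K ^ n) h - h) := by ring
    rw [this]
    refine summable_add K ⟨(σyF K ^ n) h, ?_⟩ ih
    rw [pow_succ']
    rfl

lemma summable_neg {f : Fxy K} (hf : IsSummableY K f) : IsSummableY K (-f) := by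
  obtain ⟨a, ha⟩ := hf; exact ⟨-a, by rw [ha, map_neg]; ring⟩

lemma summable_shift (ℓ : ℤ) (h : Fxy K) : IsSummableY K ((σyF K ^ ℓ) h - h) := by
  obtain ⟨n, rfl | rfl⟩ := ℓ.eq_nat_or_neg
  · rw [zpow_natCast]; exact summable_shift_pow K n h
  · have := summable_neg K (summable_shift_pow K n ((σyF K ^ (-(n:ℤ))) h))
    have e : (σyF K ^ (n:ℕ)) ((σyF K ^ (-(n:ℤ))) h) = h := by
      rw [show ((σyF K ^ (n:ℕ)) ((σyF K ^ (-(n:ℤ))) h)) = ((σyF K ^ (n:ℤ)) * (σyF K ^ (-(n:ℤ)))) h from by rw [zpow_natCast]; rfl,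
        ← zpow_add, add_neg_cancel, zpow_zero]; rfl
    rw [e] at this
    simpa using this

-- Properness lemmas
lemma properY_zero : ProperY K 0 := by
  refine ⟨0, 1, one_ne_zero, by simp, by simp⟩

lemma properY_add {f g : Fxy K} (hf : ProperY K f) (hg : ProperY K g) :
    ProperY K (f + g) := by
  obtain ⟨a, b, hb, hfe, hdf⟩ := hf
  obtain ⟨a', b', hb', hge, hdg⟩ := hg
  refine ⟨a * b' + b * a', b * b', mul_ne_zero hb hb', ?_, ?_⟩
  · rw [hfe, hge, div_add_div _ _ (ι₀_ne_zero K hb) (ι₀_ne_zero K hb'), ← map_mul, ← map_mul,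
      ← map_add, ← map_mul]
  · have h1 : (a * b').degree < (b * b').degree := by
      rw [degree_mul, degree_mul]
      exact WithBot.add_lt_add_right (degree_ne_bot.mpr hb') hdf
    have h2 : (b * a').degree < (b * b').degree := by
      rw [degree_mul, degree_mul]
      exact WithBot.add_lt_add_left (degree_ne_bot.mpr hb) hdg
    exact lt_of_le_of_lt (degree_add_le _ _) (max_lt h1 h2)

lemma properY_Cmul (c : Polynomial K) {f : Fxy K} (hf : ProperY K f) :
    ProperY K (ιx₀ K c * f) := by
  obtain ⟨a, b, hb, hfe, hdf⟩ := hf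
  refine ⟨Polynomial.C c * a, b, hb, ?_, ?_⟩
  · rw [hfe, ιx₀_eq, map_mul, mul_div_assoc]
  · refine lt_of_le_of_lt ?_ hdf
    calc (Polynomial.C c * a).degree ≤ (Polynomial.C c).degree + a.degree := degree_mul_le _ _
    _ ≤ 0 + a.degree := add_le_add_left degree_C_le _
    _ = a.degree := zero_add _

lemma properY_finsum {m : ℕ} (F : Fin m → Fxy K) (h : ∀ i, ProperY K (F i)) :
    ProperY K (∑ i : Fin m, F i) := by
  induction m with
  | zero => simpa using properY_zero K
  | succ n ih =>
    rw [Fin.sum_univ_succ]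
    exact properY_add K (h 0) (ih _ (fun i => h i.succ))

lemma properY_frac {a b : Rxy K} (u : Polynomial K) (hu : u ≠ 0) (hb : b ≠ 0)
    (hd : a.degree < b.degree) :
    ProperY K (ι₀ K a / (ιx₀ K u * ι₀ K b)) := by
  refine ⟨a, Polynomial.C u * b, mul_ne_zero (by simpa using hu) hb, ?_, ?_⟩
  · rw [ιx₀_eq, ← map_mul]
  · rwa [degree_mul, degree_C hu, zero_add]

end Aux2
end St15
namespace St15
section Aux3
variable (K : Type*) [Field K] [CharZero K]

lemma natDegree_eq_zero_of_dvd_C {w : Polynomial K} (hw : w ≠ 0) {d : Rxy K}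
    (h : d ∣ (Polynomial.C w : Rxy K)) : d.natDegree = 0 := by
  obtain ⟨e, he⟩ := h
  have hCw : (Polynomial.C w : Rxy K) ≠ 0 := by simpa using hw
  have hd : d ≠ 0 := fun h0 => hCw (by rw [he, h0, zero_mul])
  have he' : e ≠ 0 := fun h0 => hCw (by rw [he, h0, mul_zero])
  have := congrArg Polynomial.natDegree he
  rw [Polynomial.natDegree_mul hd he', Polynomial.natDegree_C] at this
  omega

lemma sigmaYFree_of_prime {b : Rxy K} (hb : b ≠ 0)
    (h : ∀ ℓ : ℤ, ℓ ≠ 0 → ∀ q : Rxy K, Prime q → q ∣ b → q ∣ (σyR K ^ ℓ) b →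
      q.natDegree = 0) : SigmaYFree K b := by
  intro ℓ hℓ d
  induction d using UniqueFactorizationMonoid.induction_on_prime with
  | h₁ => intro h1 _; exact absurd (zero_dvd_iff.mp h1) hb
  | h₂ x hx => intro _ _; exact Polynomial.natDegree_eq_zero_of_isUnit hx
  | h₃ a q ha hq ih =>
    intro h1 h2
    have hqd : q.natDegree = 0 :=
      h ℓ hℓ q hq (dvd_trans (dvd_mul_right q a) h1) (dvd_trans (dvd_mul_right q a) h2)
    have had : a.natDegree = 0 :=
      ih (dvd_trans (dvd_mul_left a q) h1) (dvd_trans (dvd_mul_left a q) h2)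
    rw [Polynomial.natDegree_mul hq.ne_zero ha, hqd, had]

lemma sigmaYFree_of_dvd {b b' : Rxy K} (h : b' ∣ b) (hb : SigmaYFree K b) :
    SigmaYFree K b' := fun ℓ hℓ d hd1 hd2 =>
  hb ℓ hℓ d (hd1.trans h) (hd2.trans (map_dvd (F := RingAut (Rxy K)) _ h))

/-- reduce a fraction over `ι₀` to lowest terms keeping σ-freeness. -/
lemma sigmaYFreeDenom_of_rep {f : Fxy K} {a b : Rxy K} (hb : b ≠ 0)
    (hfree : SigmaYFree K b) (hf : f = ι₀ K a / ι₀ K b) : SigmaYFreeDenom K f := by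
  by_cases ha : a = 0
  · refine ⟨0, 1, one_ne_zero, ?_, by simp [hf, ha], ?_⟩
    · intro d _ hd1; exact isUnit_of_dvd_one hd1
    · intro ℓ hℓ d hd1 _
      exact Polynomial.natDegree_eq_zero_of_isUnit (isUnit_of_dvd_one hd1)
  · obtain ⟨a', b', c', hcop, hca, hcb⟩ :=
      UniqueFactorizationMonoid.exists_reduced_factors a ha b
    have hc' : c' ≠ 0 := fun h0 => hb (by rw [← hcb, h0, zero_mul])
    have hb' : b' ≠ 0 := fun h0 => hb (by rw [← hcb, h0, mul_zero])
    refine ⟨a', b', hb', hcop, ?_, sigmaYFree_of_dvd K ⟨c', by rw [← hcb]; ring⟩ hfree⟩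
    rw [hf, ← hca, ← hcb, map_mul, map_mul,
      mul_div_mul_left _ _ (ι₀_ne_zero K hc')]

end Aux3
end St15
namespace St15
section Aux4
variable (K : Type*) [Field K] [CharZero K]

lemma σyR_zpow_zero (p : Rxy K) : (σyR K ^ (0:ℤ)) p = p := by rw [zpow_zero]; rfl

lemma bigFree (w : Polynomial K) (hw : w ≠ 0) {b b0 p0 : Rxy K}
    (hb : b ≠ 0) (hb0 : b0 ≠ 0)
    (hbfree : SigmaYFree K b) (hb0free : SigmaYFree K b0)
    (hp0 : ∀ s : ℤ, s ≠ 0 → ∀ d : Rxy K, d ∣ b0 → d ∣ (σyR K ^ s) p0 → d.natDegree = 0)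
    (hp0b : p0 ∣ b)
    {m : ℕ} {pp : Fin m → Rxy K} (hppb0 : ∀ i, pp i ∣ b0) :
    SigmaYFree K (Polynomial.C w * (b0 * (p0 * ∏ i : Fin m, pp i))) := by
  have hp0ne : p0 ≠ 0 := fun h0 => hb (by
    obtain ⟨c, hc⟩ := hp0b; rw [hc, h0, zero_mul])
  have hppne : ∀ i, pp i ≠ 0 := fun i h0 => hb0 (by
    obtain ⟨c, hc⟩ := hppb0 i; rw [hc, h0, zero_mul])
  have hBig : Polynomial.C w * (b0 * (p0 * ∏ i : Fin m, pp i)) ≠ 0 := by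
    refine mul_ne_zero (by simpa using hw) (mul_ne_zero hb0 (mul_ne_zero hp0ne ?_))
    exact Finset.prod_ne_zero_iff.mpr (fun i _ => hppne i)
  refine sigmaYFree_of_prime K hBig ?_
  intro ℓ hℓ q hq hd1 hd2
  -- unshifted membership
  rcases hq.dvd_mul.mp hd1 with hqw | hrest
  · exact natDegree_eq_zero_of_dvd_C K hw hqw
  have hkey : q ∣ b0 ∨ q ∣ p0 := by
    rcases hq.dvd_mul.mp hrest with h | h
    · exact Or.inl h
    rcases hq.dvd_mul.mp h with h' | h'
    · exact Or.inr h'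
    · obtain ⟨i, _, hi⟩ := (hq.dvd_finset_prod_iff _).mp h'
      exact Or.inl (hi.trans (hppb0 i))
  -- shifted membership
  rw [map_mul, map_mul, map_mul, map_prod] at hd2
  rcases hq.dvd_mul.mp hd2 with hqw | hrest2
  · rw [σyR_zpow_C] at hqw
    exact natDegree_eq_zero_of_dvd_C K hw hqw
  have hkey2 : q ∣ (σyR K ^ ℓ) b0 ∨ q ∣ (σyR K ^ ℓ) p0 := by
    rcases hq.dvd_mul.mp hrest2 with h | h
    · exact Or.inl h
    rcases hq.dvd_mul.mp h with h' | h'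
    · exact Or.inr h'
    · obtain ⟨i, _, hi⟩ := (hq.dvd_finset_prod_iff _).mp h'
      exact Or.inl (hi.trans (map_dvd (F := RingAut (Rxy K)) _ (hppb0 i)))
  rcases hkey with hqb0 | hqp0 <;> rcases hkey2 with hs | hs
  · exact hb0free ℓ hℓ q hqb0 hs
  · exact hp0 ℓ hℓ q hqb0 hs
  · -- q ∣ p0, q ∣ σ^ℓ b0 : shift back by -ℓ
    have h1 : (σyR K ^ (-ℓ)) q ∣ b0 := by
      have := map_dvd (F := RingAut (Rxy K)) (σyR K ^ (-ℓ)) hs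
      rwa [σyR_zpow_zpow, neg_add_cancel, σyR_zpow_zero] at this
    have h2 : (σyR K ^ (-ℓ)) q ∣ (σyR K ^ (-ℓ)) p0 := map_dvd (F := RingAut (Rxy K)) _ hqp0
    have := hp0 (-ℓ) (neg_ne_zero.mpr hℓ) _ h1 h2
    rwa [natDegree_σyR_zpow] at this
  · exact hbfree ℓ hℓ q (hqp0.trans hp0b) (hs.trans (map_dvd (F := RingAut (Rxy K)) _ hp0b))

end Aux4
end St15
namespace St15
section Aux5
variable (K : Type*) [Field K] [CharZero K]

lemma σyF_zpow_zpow (ℓ ℓ' : ℤ) (f : Fxy K) :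
    (σyF K ^ ℓ) ((σyF K ^ ℓ') f) = (σyF K ^ (ℓ + ℓ')) f := by
  rw [zpow_add]; rfl

lemma σyF_zpow_zero (f : Fxy K) : (σyF K ^ (0:ℤ)) f = f := by rw [zpow_zero]; rfl

lemma hasden_of_dvd {a b B : Rxy K} (hB : B ≠ 0) (hdvd : b ∣ B) :
    ∃ A : Rxy K, ι₀ K a / ι₀ K b = ι₀ K A / ι₀ K B := by
  obtain ⟨c, hc⟩ := hdvd
  have hb : b ≠ 0 := fun h0 => hB (by rw [hc, h0, zero_mul])
  have hcne : c ≠ 0 := fun h0 => hB (by rw [hc, h0, mul_zero])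
  refine ⟨a * c, ?_⟩
  rw [hc, map_mul, map_mul, mul_div_mul_right _ _ (ι₀_ne_zero K hcne)]

lemma hasden_add {f g : Fxy K} {B : Rxy K}
    (hf : ∃ A : Rxy K, f = ι₀ K A / ι₀ K B) (hg : ∃ A : Rxy K, g = ι₀ K A / ι₀ K B) :
    ∃ A : Rxy K, f + g = ι₀ K A / ι₀ K B := by
  obtain ⟨A, hA⟩ := hf; obtain ⟨A', hA'⟩ := hg
  exact ⟨A + A', by rw [hA, hA', ← add_div, map_add]⟩

lemma hasden_finsum {m : ℕ} {F : Fin m → Fxy K} {B : Rxy K}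
    (h : ∀ i, ∃ A : Rxy K, F i = ι₀ K A / ι₀ K B) :
    ∃ A : Rxy K, ∑ i : Fin m, F i = ι₀ K A / ι₀ K B := by
  induction m with
  | zero => exact ⟨0, by simp⟩
  | succ n ih =>
    rw [Fin.sum_univ_succ]
    exact hasden_add K (h 0) (ih (fun i => h i.succ))

lemma hasden_Cmul (c : Polynomial K) {f : Fxy K} {B : Rxy K}
    (hf : ∃ A : Rxy K, f = ι₀ K A / ι₀ K B) :
    ∃ A : Rxy K, ιx₀ K c * f = ι₀ K A / ι₀ K B := by
  obtain ⟨A, hA⟩ := hf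
  exact ⟨Polynomial.C c * A, by rw [hA, ιx₀_eq, map_mul, mul_div_assoc]⟩

end Aux5
end St15


/-- Proposition `PROP:adjustrem`.
Let `r, r_0 ∈ K(x,y)` be two nonzero `σ_y`-remainders, with `y`-primitive (`σ_y`-free)
denominators `b, b_0`, and let `r = f_0/p_0 + Σ_{i=1}^{m} f_i/σ_y^{ℓ_i}(p_i)` be the
SCD-based partial fraction decomposition of `r` with respect to `r_0` (based on the
`σ_y`-coprime decomposition `b = p_0 σ_y^{ℓ_1}(p_1) ⋯ σ_y^{ℓ_m}(p_m)` of `b` with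
respect to `b_0`).  Define `r̃ = f_0/p_0 + Σ_{i=1}^{m} σ_y^{−ℓ_i}(f_i)/p_i`.  Then `r̃`
is a `σ_y`-remainder of `r`, and for any `c_0, c_1 ∈ K[x]` the rational function
`c_0 r_0 + c_1 r̃` is proper with respect to `y` with `σ_y`-free denominator (hence is a
`σ_y`-remainder). -/
theorem statement15 (K : Type*) [Field K] [CharZero K]
    (r r0 : Fxy K) (hrne : r ≠ 0) (hr0ne : r0 ≠ 0)
    (hrrem : IsSigmaYRemainder K r) (hr0rem : IsSigmaYRemainder K r0)
    -- `b` is the `y`-primitive denominator of `r`: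
    (a b : Rxy K) (u : Polynomial K) (hu : u ≠ 0) (hb : b ≠ 0)
    (hbprim : YPrimitive K b) (hbfree : SigmaYFree K b)
    (hrrep : r = ι₀ K a / (ιx₀ K u * ι₀ K b))
    (hrred : IsRelPrime a (Polynomial.C u * b)) (hrprop : a.degree < b.degree)
    -- `b0` is the `y`-primitive denominator of `r0`:
    (a0 b0 : Rxy K) (u0 : Polynomial K) (hu0 : u0 ≠ 0) (hb0 : b0 ≠ 0)
    (hb0prim : YPrimitive K b0) (hb0free : SigmaYFree K b0)
    (hr0rep : r0 = ι₀ K a0 / (ιx₀ K u0 * ι₀ K b0))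
    (hr0red : IsRelPrime a0 (Polynomial.C u0 * b0)) (hr0prop : a0.degree < b0.degree)
    -- the `σ_y`-coprime decomposition of `b` with respect to `b0`:
    (m : ℕ) (p0 : Rxy K) (pp : Fin m → Rxy K) (ℓv : Fin m → ℤ)
    (hℓne : ∀ i, ℓv i ≠ 0) (hℓinj : Function.Injective ℓv)
    (hscd : b = p0 * ∏ i : Fin m, (σyR K ^ ℓv i) (pp i))
    (hp0 : ∀ s : ℤ, s ≠ 0 → ∀ d : Rxy K, d ∣ b0 → d ∣ (σyR K ^ s) p0 → d.natDegree = 0)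
    (hpp : ∀ i, (pp i).Monic ∧ YPrimitive K (pp i) ∧ pp i ∣ b0 ∧ 0 < (pp i).natDegree)
    -- the SCD-based partial fraction decomposition of `r` with respect to `r0`:
    (f0 : Fxy K) (fi : Fin m → Fxy K)
    (hf0 : ∃ (aa : Rxy K) (uu : Polynomial K), uu ≠ 0 ∧
        f0 = ι₀ K aa / ιx₀ K uu ∧ aa.degree < p0.degree)
    (hfi : ∀ i, ∃ (aa : Rxy K) (uu : Polynomial K), uu ≠ 0 ∧
        fi i = ι₀ K aa / ιx₀ K uu ∧ aa.degree < (pp i).degree)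
    (hdecomp : r = f0 / ι₀ K p0 + ∑ i : Fin m, fi i / ι₀ K ((σyR K ^ ℓv i) (pp i)))
    -- the adjusted `σ_y`-remainder `r̃`:
    (rt : Fxy K)
    (hrt : rt = f0 / ι₀ K p0 + ∑ i : Fin m, (σyF K ^ (-(ℓv i))) (fi i) / ι₀ K (pp i)) :
    IsSigmaYRemainderOf K rt r ∧
      ∀ c0 c1 : Polynomial K,
        ProperY K (ιx₀ K c0 * r0 + ιx₀ K c1 * rt) ∧
          SigmaYFreeDenom K (ιx₀ K c0 * r0 + ιx₀ K c1 * rt) := by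
  classical
  open St15 in
  obtain ⟨aa0, uu0, huu0, hf0e, hf0d⟩ := hf0
  choose aai uui huui hfie hfid using hfi
  have hp0ne : p0 ≠ 0 := by
    intro h0; exact hb (by rw [hscd, h0, zero_mul])
  have hppne : ∀ i, pp i ≠ 0 := fun i => ((hpp i).1).ne_zero
  have hppdvd : ∀ i, pp i ∣ b0 := fun i => (hpp i).2.2.1
  have hp0b : p0 ∣ b := ⟨_, hscd⟩
  -- Part A : summability of r - rt
  have hsum : IsSummableY K (r - rt) := by
    have hEq : r - rt = ∑ i : Fin m,
        (fi i / ι₀ K ((σyR K ^ ℓv i) (pp i))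
          - (σyF K ^ (-(ℓv i))) (fi i) / ι₀ K (pp i)) := by
      rw [hdecomp, hrt, Finset.sum_sub_distrib]
      ring
    rw [hEq]
    apply St15.summable_finsum
    intro i
    set T := fi i / ι₀ K ((σyR K ^ ℓv i) (pp i)) with hT
    have hTs : (σyF K ^ (-(ℓv i))) T = (σyF K ^ (-(ℓv i))) (fi i) / ι₀ K (pp i) := by
      rw [hT, map_div₀, St15.σyF_zpow_ι₀, St15.σyR_zpow_zpow, neg_add_cancel,
        St15.σyR_zpow_zero]
    rw [← hTs]
    have hback : (σyF K ^ (ℓv i)) ((σyF K ^ (-(ℓv i))) T) = T := by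
      rw [St15.σyF_zpow_zpow, add_neg_cancel, St15.σyF_zpow_zero]
    have := St15.summable_shift K (ℓv i) ((σyF K ^ (-(ℓv i))) T)
    rwa [hback] at this
  -- Part B : properness of rt
  have hprt : ProperY K rt := by
    rw [hrt]
    apply St15.properY_add
    · have h1 : f0 / ι₀ K p0 = ι₀ K aa0 / (ιx₀ K uu0 * ι₀ K p0) := by
        rw [hf0e, div_div]
      rw [h1]; exact St15.properY_frac K uu0 huu0 hp0ne hf0d
    · apply St15.properY_finsum
      intro i
      have hσ : (σyF K ^ (-(ℓv i))) (fi i)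
          = ι₀ K ((σyR K ^ (-(ℓv i))) (aai i)) / ιx₀ K (uui i) := by
        rw [hfie i, map_div₀, St15.σyF_zpow_ι₀, St15.ιx₀_eq, St15.σyF_zpow_ι₀,
          St15.σyR_zpow_C, ← St15.ιx₀_eq]
      rw [hσ, div_div]
      exact St15.properY_frac K (uui i) (huui i) (hppne i)
        (show ((σyR K ^ (-(ℓv i))) (aai i)).degree < (pp i).degree by
          rw [St15.degree_σyR_zpow]; exact hfid i)
  -- common denominator
  set w : Polynomial K := u0 * (uu0 * ∏ i : Fin m, uui i) with hw
  have hwne : w ≠ 0 := mul_ne_zero hu0 (mul_ne_zero huu0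
    (Finset.prod_ne_zero_iff.mpr (fun i _ => huui i)))
  set B : Rxy K := Polynomial.C w * (b0 * (p0 * ∏ i : Fin m, pp i)) with hB
  have hBne : B ≠ 0 := mul_ne_zero (by simpa using hwne)
    (mul_ne_zero hb0 (mul_ne_zero hp0ne (Finset.prod_ne_zero_iff.mpr (fun i _ => hppne i))))
  have hBfree : SigmaYFree K B :=
    St15.bigFree K w hwne hb hb0 hbfree hb0free hp0 hp0b hppdvd
  have hCdvd : ∀ v : Polynomial K, v ∣ w → (Polynomial.C v : Rxy K) ∣ Polynomial.C w :=
    fun v hv => map_dvd (Polynomial.C : Polynomial K →+* Rxy K) hv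
  -- representation of rt over B
  have hrtrep : ∃ A : Rxy K, rt = ι₀ K A / ι₀ K B := by
    rw [hrt]
    apply St15.hasden_add
    · have h1 : f0 / ι₀ K p0 = ι₀ K aa0 / ι₀ K (Polynomial.C uu0 * p0) := by
        rw [hf0e, St15.ιx₀_eq, div_div, ← map_mul]
      rw [h1]
      refine St15.hasden_of_dvd K hBne (mul_dvd_mul (hCdvd uu0 ?_) ?_)
      · exact (dvd_mul_right uu0 _).trans (dvd_mul_left _ u0)
      · exact (dvd_mul_right p0 _).trans (dvd_mul_left _ b0)
    · apply St15.hasden_finsum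
      intro i
      have hσ : (σyF K ^ (-(ℓv i))) (fi i)
          = ι₀ K ((σyR K ^ (-(ℓv i))) (aai i)) / ι₀ K (Polynomial.C (uui i)) := by
        rw [hfie i, map_div₀, St15.σyF_zpow_ι₀, St15.ιx₀_eq, St15.σyF_zpow_ι₀,
          St15.σyR_zpow_C]
      have h2 : (σyF K ^ (-(ℓv i))) (fi i) / ι₀ K (pp i)
          = ι₀ K ((σyR K ^ (-(ℓv i))) (aai i)) / ι₀ K (Polynomial.C (uui i) * pp i) := by
        rw [hσ, div_div, ← map_mul]
      rw [h2]
      refine St15.hasden_of_dvd K hBne (mul_dvd_mul (hCdvd (uui i) ?_) ?_)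
      · exact ((Finset.dvd_prod_of_mem uui (Finset.mem_univ i)).trans
          (dvd_mul_left _ uu0)).trans (dvd_mul_left _ u0)
      · exact ((Finset.dvd_prod_of_mem pp (Finset.mem_univ i)).trans
          (dvd_mul_left _ p0)).trans (dvd_mul_left _ b0)
  have hsfdrt : SigmaYFreeDenom K rt := by
    obtain ⟨A, hA⟩ := hrtrep
    exact St15.sigmaYFreeDenom_of_rep K hBne hBfree hA
  refine ⟨⟨hsum, hprt, hsfdrt⟩, ?_⟩
  intro c0 c1
  constructor
  · exact St15.properY_add K (St15.properY_Cmul K c0 hr0rem.1) (St15.properY_Cmul K c1 hprt)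
  · have h0 : r0 = ι₀ K a0 / ι₀ K (Polynomial.C u0 * b0) := by
      rw [hr0rep, St15.ιx₀_eq, ← map_mul]
    have hden0 : ∃ A : Rxy K, r0 = ι₀ K A / ι₀ K B := by
      rw [h0]
      refine St15.hasden_of_dvd K hBne (mul_dvd_mul (hCdvd u0 (dvd_mul_right _ _)) ?_)
      · exact dvd_mul_right b0 _
    obtain ⟨A, hA⟩ := St15.hasden_add K (St15.hasden_Cmul K c0 hden0)
      (St15.hasden_Cmul K c1 hrtrep)
    exact St15.sigmaYFreeDenom_of_rep K hBne hBfree hA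
end
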